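/- Let (Q, +) be an abelian group, let φ and ψ be automorphisms of (Q, +), and define the T-quasigroup operation x·y = φ(x) + ψ(y). Then the Schröder identity of generalized associativity (y·z)·(z·(x·y)) = x holds for all x, y, z ∈ Q if and only if the following three conditions hold: (i) φ(x) = ψ⁻¹(ψ⁻¹(x)) for all x (i.e. φ = ψ⁻²); (ii) φ(φ(y)) + ψ(ψ(ψ(y))) = 0 for all y (equivalently, ψ⁷(x) = −x for all x, whence φ⁷ = id and ψ¹⁴ = id); (iii) φ(ψ(z)) + ψ(φ(z)) = 0 for all z. -/

import Mathlib

/-- In a T-quasigroup `x·y = φ(x) + ψ(y)` over an abelian group, the Schröder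
identity of generalized associativity `(y·z)·(z·(x·y)) = x` holds iff
`φ = ψ⁻²`, `φ² + ψ³ = 0` and `φψ + ψφ = 0`. -/
theorem tquasigroup_schroeder_gen_assoc_iff {Q : Type*} [AddCommGroup Q]
    (φ ψ : AddAut Q) :
    (∀ x y z : Q,
        (φ (φ y + ψ z) + ψ (φ z + ψ (φ x + ψ y))) = x) ↔
      ((∀ x : Q, φ x = ψ.symm (ψ.symm x)) ∧
       (∀ y : Q, φ (φ y) + ψ (ψ (ψ y)) = 0) ∧
       (∀ z : Q, φ (ψ z) + ψ (φ z) = 0)) := by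
  constructor
  · intro h
    refine ⟨?_, ?_, ?_⟩
    · intro x
      have h0 := h x 0 0
      simp only [map_zero, add_zero, zero_add] at h0
      rw [← h0]
      simp
      exact h0
    · intro y
      have h0 := h 0 y 0
      simpa using h0
    · intro z
      have h0 := h 0 0 z
      simpa using h0
  · rintro ⟨h1, h2, h3⟩ x y z
    have hx : ψ (ψ (φ x)) = x := by rw [h1]; simp
    simp only [map_add]
    rw [hx]
    have e : φ (φ y) + φ (ψ z) + (ψ (φ z) + (x + ψ (ψ (ψ y)))) =
        (φ (φ y) + ψ (ψ (ψ y))) + ((φ (ψ z) + ψ (φ z)) + x) := by abel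
    rw [e, h2, h3]
    simp
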